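/- Let 𝒞 be a field on Ω. P is coherent in betting system 3 if and only if P is a countably additive probability and Ω admits a finite partition into 𝒞-measurable atoms. -/

import Mathlib

open Filter MeasureTheory ENNReal

variable {Ω : Type*}

noncomputable def ind (A : Set Ω) (ω : Ω) : ℝ := A.indicator (fun _ => (1:ℝ)) ω

def SeriesTendsTo (f : ℕ → ℝ) (x : ℝ) : Prop :=
  Tendsto (fun n => ∑ i ∈ Finset.range n, f i) atTop (nhds x)

def SeriesConv (f : ℕ → ℝ) : Prop := ∃ x, SeriesTendsTo f x

noncomputable def bterm (P : Set Ω → ℝ) (α : ℕ → ℝ) (A : ℕ → Set Ω) (ω : Ω) (i : ℕ) : ℝ :=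
  α i * (ind (A i) ω - P (A i))

def IsSetField (C : Set (Set Ω)) : Prop :=
  Set.univ ∈ C ∧ (∀ A ∈ C, Aᶜ ∈ C) ∧ ∀ A ∈ C, ∀ B ∈ C, A ∪ B ∈ C

def System1 (C : Set (Set Ω)) (α : ℕ → ℝ) (A : ℕ → Set Ω) : Prop :=
  (∀ i, A i ∈ C) ∧ {i | α i ≠ 0}.Finite

def System2 (C : Set (Set Ω)) (P : Set Ω → ℝ) (α : ℕ → ℝ) (A : ℕ → Set Ω) : Prop :=
  (∀ i, A i ∈ C) ∧ Summable (fun i => |α i| * P (A i)) ∧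
    ∀ ω, SeriesConv (bterm P α A ω)

def System2A (C : Set (Set Ω)) (P : Set Ω → ℝ) (α : ℕ → ℝ) (A : ℕ → Set Ω) : Prop :=
  (∀ i, A i ∈ C) ∧ ∀ ω, Summable (fun i => |bterm P α A ω i|)

def System2B (C : Set (Set Ω)) (P : Set Ω → ℝ) (α : ℕ → ℝ) (A : ℕ → Set Ω) : Prop :=
  (∀ i, A i ∈ C) ∧ ∃ M : ℝ, ∀ ω, ∀ n, ∑ i ∈ Finset.range n, |bterm P α A ω i| ≤ M

def System3 (C : Set (Set Ω)) (P : Set Ω → ℝ) (α : ℕ → ℝ) (A : ℕ → Set Ω) : Prop :=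
  (∀ i, A i ∈ C) ∧ SeriesConv (fun i => α i * P (A i)) ∧
    ∀ ω, SeriesConv (bterm P α A ω)

def IncoherentIn (P : Set Ω → ℝ) (S : (ℕ → ℝ) → (ℕ → Set Ω) → Prop) : Prop :=
  ∃ α A, S α A ∧ ∃ ε > (0:ℝ), ∀ ω, ∃ L, SeriesTendsTo (bterm P α A ω) L ∧ L ≤ -ε

def CoherentIn (P : Set Ω → ℝ) (S : (ℕ → ℝ) → (ℕ → Set Ω) → Prop) : Prop :=
  ¬ IncoherentIn P S

def IsNullSet (C : Set (Set Ω)) (P : Set Ω → ℝ) (Z : Set Ω) : Prop :=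
  ∀ δ : ℝ, 0 < δ → ∃ Zd ∈ C, Z ⊆ Zd ∧ P Zd < δ

def WeaklyIncoherentIn (C : Set (Set Ω)) (P : Set Ω → ℝ)
    (S : (ℕ → ℝ) → (ℕ → Set Ω) → Prop) : Prop :=
  ∃ α A, S α A ∧ ∃ ε > (0:ℝ), ∃ Z : Set Ω, IsNullSet C P Z ∧
    ∀ ω ∉ Z, ∃ L, SeriesTendsTo (bterm P α A ω) L ∧ L ≤ -ε

def StronglyCoherentIn (C : Set (Set Ω)) (P : Set Ω → ℝ)
    (S : (ℕ → ℝ) → (ℕ → Set Ω) → Prop) : Prop :=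
  ¬ WeaklyIncoherentIn C P S

def IrrationalIn (P : Set Ω → ℝ) (S : (ℕ → ℝ) → (ℕ → Set Ω) → Prop) : Prop :=
  ∃ α A, S α A ∧ ∀ ω, ∃ L, SeriesTendsTo (bterm P α A ω) L ∧ L < 0

def RationalIn (P : Set Ω → ℝ) (S : (ℕ → ℝ) → (ℕ → Set Ω) → Prop) : Prop :=
  ¬ IrrationalIn P S

def IsCAProb (C : Set (Set Ω)) (P : Set Ω → ℝ) : Prop :=
  P Set.univ = 1 ∧ (∀ A ∈ C, 0 ≤ P A) ∧
  (∀ A ∈ C, ∀ B ∈ C, Disjoint A B → P (A ∪ B) = P A + P B) ∧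
  (∀ A : ℕ → Set Ω, (∀ i, A i ∈ C) → Pairwise (Function.onFun Disjoint A) →
    (⋃ i, A i) ∈ C → HasSum (fun i => P (A i)) (P (⋃ i, A i)))

def IsPAtom (C : Set (Set Ω)) (P : Set Ω → ℝ) (F : Set Ω) : Prop :=
  F ∈ C ∧ 0 < P F ∧ ∀ B ∈ C, B ⊆ F → P B = P F ∨ P B = 0

def FiniteAtomicPartition (C : Set (Set Ω)) (P : Set Ω → ℝ) : Prop :=
  ∃ (n : ℕ) (F : Fin n → Set Ω), (∀ j, IsPAtom C P (F j)) ∧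
    Pairwise (Function.onFun Disjoint F) ∧ (⋃ j, F j) = Set.univ

def IsPFinite (C : Set (Set Ω)) (P : Set Ω → ℝ) : Prop :=
  ∀ B : ℕ → Set Ω, (∀ i, B i ∈ C) → (∀ i, B (i+1) ⊆ B i) →
    Tendsto (fun i => P (B i)) atTop (nhds 0) → ∃ j, P (B j) = 0

section Helpers

variable {C : Set (Set Ω)} {P : Set Ω → ℝ}

lemma ind_of_mem {A : Set Ω} {ω : Ω} (h : ω ∈ A) : ind A ω = 1 := by
  simp [ind, Set.indicator_of_mem h]

lemma ind_of_not_mem {A : Set Ω} {ω : Ω} (h : ω ∉ A) : ind A ω = 0 := by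
  simp [ind, Set.indicator_of_notMem h]

lemma ind_nonneg (A : Set Ω) (ω : Ω) : 0 ≤ ind A ω := by
  unfold ind; by_cases h : ω ∈ A <;> simp [Set.indicator_of_mem, Set.indicator_of_notMem, h]

lemma ind_le_one (A : Set Ω) (ω : Ω) : ind A ω ≤ 1 := by
  unfold ind; by_cases h : ω ∈ A <;> simp [Set.indicator_of_mem, Set.indicator_of_notMem, h]

lemma SeriesTendsTo.sub {f g : ℕ → ℝ} {x y : ℝ} (hf : SeriesTendsTo f x)
    (hg : SeriesTendsTo g y) : SeriesTendsTo (fun i => f i - g i) (x - y) := by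
  have := Filter.Tendsto.sub hf hg
  simpa [SeriesTendsTo, Finset.sum_sub_distrib] using this

lemma seriesTendsTo_of_eventually_zero {f : ℕ → ℝ} {N : ℕ} (h : ∀ i, N ≤ i → f i = 0) :
    SeriesTendsTo f (∑ i ∈ Finset.range N, f i) := by
  apply tendsto_atTop_of_eventually_const (i₀ := N)
  intro m hm
  rw [← Finset.sum_range_add_sum_Ico f hm, Finset.sum_eq_zero (fun i hi => h i (Finset.mem_Ico.mp hi).1), add_zero]

lemma IsSetField.empty_mem (hC : IsSetField C) : ∅ ∈ C := by
  simpa using hC.2.1 _ hC.1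

lemma IsSetField.inter_mem (hC : IsSetField C) {A B : Set Ω} (hA : A ∈ C) (hB : B ∈ C) :
    A ∩ B ∈ C := by
  have := hC.2.1 _ (hC.2.2 _ (hC.2.1 _ hA) _ (hC.2.1 _ hB))
  simpa [Set.compl_union] using this

lemma IsSetField.diff_mem (hC : IsSetField C) {A B : Set Ω} (hA : A ∈ C) (hB : B ∈ C) :
    A \ B ∈ C := hC.inter_mem hA (hC.2.1 _ hB)

/-- Finite additivity hypothesis abbreviation -/
def FinAdd (C : Set (Set Ω)) (P : Set Ω → ℝ) : Prop :=
  ∀ A ∈ C, ∀ B ∈ C, Disjoint A B → P (A ∪ B) = P A + P B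

lemma P_empty (hC : IsSetField C) (hfa : FinAdd C P) : P ∅ = 0 := by
  have h := hfa ∅ hC.empty_mem ∅ hC.empty_mem (by simp)
  simp only [Set.union_self] at h
  linarith

lemma P_diff (hC : IsSetField C) (hfa : FinAdd C P) {A B : Set Ω} (hA : A ∈ C) (hB : B ∈ C)
    (hsub : B ⊆ A) : P (A \ B) = P A - P B := by
  have h1 : B ∪ (A \ B) = A := by
    rw [Set.union_diff_cancel hsub]
  have h2 := hfa B hB (A \ B) (hC.diff_mem hA hB) Set.disjoint_sdiff_right
  rw [h1] at h2; linarith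

lemma P_mono (hC : IsSetField C) (hfa : FinAdd C P) (hnn : ∀ A ∈ C, 0 ≤ P A)
    {A B : Set Ω} (hA : A ∈ C) (hB : B ∈ C) (hsub : B ⊆ A) : P B ≤ P A := by
  have := P_diff hC hfa hA hB hsub
  have h2 := hnn _ (hC.diff_mem hA hB)
  linarith

/-- partial unions of a sequence -/
lemma partial_union_mem (hC : IsSetField C) {A : ℕ → Set Ω} (hA : ∀ i, A i ∈ C) (n : ℕ) :
    (⋃ i ∈ Finset.range n, A i) ∈ C := by
  induction n with
  | zero => simpa using hC.empty_mem
  | succ n ih =>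
      have : (⋃ i ∈ Finset.range (n+1), A i) = (⋃ i ∈ Finset.range n, A i) ∪ A n := by
        simp [Finset.range_add_one, Set.iUnion_union_distrib, Set.union_comm]
      rw [this]
      exact hC.2.2 _ ih _ (hA n)

lemma P_partial_union (hC : IsSetField C) (hfa : FinAdd C P) {A : ℕ → Set Ω}
    (hA : ∀ i, A i ∈ C) (hdisj : ∀ i j, i ≠ j → Disjoint (A i) (A j)) (n : ℕ) :
    P (⋃ i ∈ Finset.range n, A i) = ∑ i ∈ Finset.range n, P (A i) := by
  induction n with
  | zero => simpa using P_empty hC hfa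
  | succ n ih =>
      have hu : (⋃ i ∈ Finset.range (n+1), A i) = (⋃ i ∈ Finset.range n, A i) ∪ A n := by
        simp [Finset.range_add_one, Set.iUnion_union_distrib, Set.union_comm]
      have hd : Disjoint (⋃ i ∈ Finset.range n, A i) (A n) := by
        apply Set.disjoint_left.mpr
        intro ω hω hωn
        simp only [Set.mem_iUnion, Finset.mem_range] at hω
        obtain ⟨i, hi, hωi⟩ := hω
        exact Set.disjoint_left.mp (hdisj i n hi.ne) hωi hωn
      rw [hu, hfa _ (partial_union_mem hC hA n) _ (hA n) hd, ih, Finset.sum_range_succ]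

end Helpers
section DutchFinite

variable {C : Set (Set Ω)} {P : Set Ω → ℝ}

lemma ind_union_disjoint {A B : Set Ω} (h : Disjoint A B) (ω : Ω) :
    ind (A ∪ B) ω = ind A ω + ind B ω := by
  by_cases hA : ω ∈ A
  · rw [ind_of_mem (Set.mem_union_left _ hA), ind_of_mem hA,
      ind_of_not_mem (Set.disjoint_left.mp h hA)]; ring
  · by_cases hB : ω ∈ B
    · rw [ind_of_mem (Set.mem_union_right _ hB), ind_of_not_mem hA, ind_of_mem hB]; ring
    · rw [ind_of_not_mem (by simp [hA, hB]), ind_of_not_mem hA, ind_of_not_mem hB]; ring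

lemma dutch_univ (hC : IsSetField C) (h : P Set.univ ≠ 1) : IncoherentIn P (System3 C P) := by
  set c := P Set.univ with hc
  set s : ℝ := if c < 1 then -1 else 1 with hs
  refine ⟨fun i => if i = 0 then s else 0, fun _ => Set.univ,
    ⟨fun _ => hC.1, ?_, ?_⟩, |1 - c|, ?_, ?_⟩
  · exact ⟨s * c, by
      simpa using seriesTendsTo_of_eventually_zero (N := 1)
        (f := fun i => (if i = 0 then s else 0) * c) (fun i hi => by
          rcases Nat.exists_eq_add_of_le hi with ⟨j, rfl⟩; simp)⟩
  · intro ω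
    exact ⟨s * (ind Set.univ ω - c), by
      simpa [bterm] using seriesTendsTo_of_eventually_zero (N := 1)
        (f := bterm P (fun i => if i = 0 then s else 0) (fun _ => Set.univ) ω) (fun i hi => by
          rcases Nat.exists_eq_add_of_le hi with ⟨j, rfl⟩; simp [bterm])⟩
  · rcases lt_or_gt_of_ne h with h' | h' <;> simp [abs_pos] <;> intro hcon <;> linarith
  · intro ω
    refine ⟨s * (ind Set.univ ω - c), by
      simpa [bterm] using seriesTendsTo_of_eventually_zero (N := 1)
        (f := bterm P (fun i => if i = 0 then s else 0) (fun _ => Set.univ) ω) (fun i hi => by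
          rcases Nat.exists_eq_add_of_le hi with ⟨j, rfl⟩; simp [bterm]), ?_⟩
    rw [ind_of_mem (Set.mem_univ ω)]
    rcases lt_or_gt_of_ne h with h' | h'
    · rw [hs, if_pos h', abs_of_pos (by linarith)]; ring_nf; linarith
    · rw [hs, if_neg (by linarith), abs_of_neg (by linarith)]; ring_nf; linarith

lemma dutch_nonneg (hC : IsSetField C) {B : Set Ω} (hB : B ∈ C) (h : P B < 0) :
    IncoherentIn P (System3 C P) := by
  refine ⟨fun i => if i = 0 then -1 else 0, fun _ => B,
    ⟨fun _ => hB, ?_, ?_⟩, -P B, by linarith, ?_⟩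
  · exact ⟨-1 * P B, by
      simpa using seriesTendsTo_of_eventually_zero (N := 1)
        (f := fun i => (if i = 0 then (-1:ℝ) else 0) * P B) (fun i hi => by
          rcases Nat.exists_eq_add_of_le hi with ⟨j, rfl⟩; simp)⟩
  · intro ω
    exact ⟨-1 * (ind B ω - P B), by
      simpa [bterm] using seriesTendsTo_of_eventually_zero (N := 1)
        (f := bterm P (fun i => if i = 0 then -1 else 0) (fun _ => B) ω) (fun i hi => by
          rcases Nat.exists_eq_add_of_le hi with ⟨j, rfl⟩; simp [bterm])⟩
  · intro ω
    refine ⟨-1 * (ind B ω - P B), by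
      simpa [bterm] using seriesTendsTo_of_eventually_zero (N := 1)
        (f := bterm P (fun i => if i = 0 then -1 else 0) (fun _ => B) ω) (fun i hi => by
          rcases Nat.exists_eq_add_of_le hi with ⟨j, rfl⟩; simp [bterm]), ?_⟩
    have := ind_nonneg B ω
    linarith

lemma dutch_finadd (hC : IsSetField C) {A B : Set Ω} (hA : A ∈ C) (hB : B ∈ C)
    (hd : Disjoint A B) (h : P (A ∪ B) ≠ P A + P B) : IncoherentIn P (System3 C P) := by
  set d : ℝ := P (A ∪ B) - P A - P B with hdd
  have hd0 : d ≠ 0 := by intro h0; apply h; rw [hdd] at h0; linarith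
  set s : ℝ := if 0 < d then 1 else -1 with hs
  set α : ℕ → ℝ := fun i => if i = 0 then s else if i < 3 then -s else 0 with hα
  set Aa : ℕ → Set Ω := fun i => if i = 0 then A ∪ B else if i = 1 then A else
    if i = 2 then B else Set.univ with hAa
  have hterm : ∀ ω, ∀ i, 3 ≤ i → bterm P α Aa ω i = 0 := by
    intro ω i hi
    rcases Nat.exists_eq_add_of_le hi with ⟨j, rfl⟩
    simp [bterm, hα]
  have hsum : ∀ ω, ∑ i ∈ Finset.range 3, bterm P α Aa ω i = -s * d := by
    intro ω
    have := ind_union_disjoint hd ω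
    simp only [Finset.sum_range_succ, Finset.sum_range_zero, bterm, hα, hAa]
    norm_num
    rw [this, hdd]
    ring
  refine ⟨α, Aa, ⟨?_, ?_, ?_⟩, |d|, abs_pos.mpr hd0, ?_⟩
  · intro i
    rw [hAa]
    by_cases h0 : i = 0
    · simpa [h0] using hC.2.2 _ hA _ hB
    · by_cases h1 : i = 1
      · simpa [h0, h1] using hA
      · by_cases h2 : i = 2
        · simpa [h0, h1, h2] using hB
        · simpa [h0, h1, h2] using hC.1
  · exact ⟨_, seriesTendsTo_of_eventually_zero (N := 3)
      (f := fun i => α i * P (Aa i)) (fun i hi => by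
        rcases Nat.exists_eq_add_of_le hi with ⟨j, rfl⟩; simp [hα])⟩
  · intro ω
    exact ⟨_, seriesTendsTo_of_eventually_zero (N := 3) (hterm ω)⟩
  · intro ω
    refine ⟨-s * d, ?_, ?_⟩
    · have := seriesTendsTo_of_eventually_zero (N := 3) (hterm ω)
      rwa [hsum ω] at this
    · rcases lt_or_gt_of_ne hd0 with h' | h'
      · rw [hs, if_neg (by linarith), abs_of_neg h']; linarith
      · rw [hs, if_pos h', abs_of_pos h']; linarith

end DutchFinite

section CA

variable {C : Set (Set Ω)} {P : Set Ω → ℝ}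

lemma ca_of_coherent (hC : IsSetField C) (hcoh : CoherentIn P (System3 C P))
    (hfa : FinAdd C P) (hnn : ∀ A ∈ C, 0 ≤ P A) :
    ∀ A : ℕ → Set Ω, (∀ i, A i ∈ C) → Pairwise (Function.onFun Disjoint A) →
    (⋃ i, A i) ∈ C → HasSum (fun i => P (A i)) (P (⋃ i, A i)) := by
  intro A hA hdisj hU
  set U := ⋃ i, A i with hUdef
  have hAU : ∀ i, A i ⊆ U := fun i => Set.subset_iUnion A i
  have hpb : ∀ n, ∑ i ∈ Finset.range n, P (A i) ≤ P U := by
    intro n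
    rw [← P_partial_union hC hfa hA (fun i j h => hdisj h) n]
    exact P_mono hC hfa hnn hU (partial_union_mem hC hA n)
      (Set.iUnion₂_subset fun i _ => hAU i)
  have hsummable : Summable (fun i => P (A i)) :=
    summable_of_sum_range_le (fun i => hnn _ (hA i)) hpb
  set t := ∑' i, P (A i) with ht
  have hts : HasSum (fun i => P (A i)) t := hsummable.hasSum
  have htend : Filter.Tendsto (fun n => ∑ i ∈ Finset.range n, P (A i)) atTop (nhds t) :=
    hts.tendsto_sum_nat
  have htle : t ≤ P U := le_of_tendsto htend (Filter.Eventually.of_forall hpb)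
  have hteq : t = P U := by
    by_contra hne
    have hlt : t < P U := lt_of_le_of_ne htle hne
    apply hcoh
    set α : ℕ → ℝ := fun i => if i = 0 then 1 else -1 with hα
    set Aa : ℕ → Set Ω := fun i => if i = 0 then U else A (i - 1) with hAa
    -- price series
    have hprice : SeriesTendsTo (fun i => α i * P (Aa i)) (P U - t) := by
      have h1 : Filter.Tendsto (fun m => ∑ i ∈ Finset.range (m + 1), α i * P (Aa i))
          atTop (nhds (P U - t)) := by
        have heq : ∀ m, ∑ i ∈ Finset.range (m + 1), α i * P (Aa i)
            = P U - ∑ i ∈ Finset.range m, P (A i) := by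
          intro m
          rw [Finset.sum_range_succ']
          simp only [hα, hAa]
          simp [Finset.sum_neg_distrib]
          ring
        simp only [heq]
        exact Filter.Tendsto.const_sub _ htend
      exact (Filter.tendsto_add_atTop_iff_nat 1).mp h1
    -- pointwise indicator series
    have hind : ∀ ω, SeriesTendsTo (fun i => α i * ind (Aa i) ω) 0 := by
      intro ω
      by_cases hω : ω ∈ U
      · obtain ⟨i₀, hi₀⟩ : ∃ i₀, ω ∈ A i₀ := by
          simpa [hUdef, Set.mem_iUnion] using hω
        have hz : ∀ i, i₀ + 2 ≤ i → α i * ind (Aa i) ω = 0 := by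
          intro i hi
          have h1 : i ≠ 0 := by omega
          have h2 : i - 1 ≠ i₀ := by omega
          have : ω ∉ A (i - 1) := fun hmem =>
            Set.disjoint_left.mp (hdisj h2) hmem hi₀
          simp [hα, hAa, h1, ind_of_not_mem this]
        have := seriesTendsTo_of_eventually_zero hz
        have hsum0 : ∑ i ∈ Finset.range (i₀ + 2), α i * ind (Aa i) ω = 0 := by
          rw [Finset.sum_range_succ']
          have : ∀ i, α (i + 1) * ind (Aa (i + 1)) ω = -(ind (A i) ω) := by
            intro i; simp [hα, hAa]
          simp only [this]
          have hsum1 : ∑ i ∈ Finset.range (i₀ + 1), ind (A i) ω = 1 := by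
            have : ∀ i ∈ Finset.range (i₀ + 1), ind (A i) ω
                = if i = i₀ then (1:ℝ) else 0 := by
              intro i _
              by_cases h : i = i₀
              · simp [h, ind_of_mem hi₀]
              · simp [h, ind_of_not_mem (fun hmem =>
                  Set.disjoint_left.mp (hdisj h) hmem hi₀)]
            rw [Finset.sum_congr rfl this]
            simp
          simp [Finset.sum_neg_distrib, hsum1, hα, hAa, ind_of_mem hω]
        rwa [hsum0] at this
      · have hz : ∀ i, 0 ≤ i → α i * ind (Aa i) ω = 0 := by
          intro i _
          by_cases h1 : i = 0
          · simp [hα, hAa, h1, ind_of_not_mem hω]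
          · have : ω ∉ A (i - 1) := fun hmem => hω (hAU _ hmem)
            simp [hα, hAa, h1, ind_of_not_mem this]
        have := seriesTendsTo_of_eventually_zero hz
        simpa using this
    refine ⟨α, Aa, ⟨?_, ⟨_, hprice⟩, ?_⟩, P U - t, by linarith, ?_⟩
    · intro i
      by_cases h : i = 0 <;> simp [hAa, h, hU, hA]
    · intro ω
      refine ⟨0 - (P U - t), ?_⟩
      have h2 := (hind ω).sub hprice
      have hfun : bterm P α Aa ω = fun i => α i * ind (Aa i) ω - α i * P (Aa i) :=
        funext fun i => by simp [bterm, mul_sub]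
      rwa [hfun]
    · intro ω
      refine ⟨0 - (P U - t), ?_, by linarith⟩
      have h2 := (hind ω).sub hprice
      have hfun : bterm P α Aa ω = fun i => α i * ind (Aa i) ω - α i * P (Aa i) :=
        funext fun i => by simp [bterm, mul_sub]
      rwa [hfun]
  rw [← hteq]
  exact hts

end CA

section Bump

variable {C : Set (Set Ω)} {P : Set Ω → ℝ}

/-- block index of bet `i` -/
def blk (i : ℕ) : ℕ := Nat.log 2 (i + 1)
/-- position within block -/
def bpos (i : ℕ) : ℕ := i + 1 - 2 ^ blk i
/-- piece size in block `b` -/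
noncomputable def spc (b : ℕ) : ℝ := ((2:ℝ) ^ (b - 1))⁻¹

lemma blk_pow_le (i : ℕ) : 2 ^ blk i ≤ i + 1 := Nat.pow_log_le_self 2 (Nat.succ_ne_zero i)
lemma lt_pow_blk (i : ℕ) : i + 1 < 2 ^ (blk i + 1) := Nat.lt_pow_succ_log_self (by norm_num) _
lemma bpos_lt (i : ℕ) : bpos i < 2 ^ blk i := by
  have h1 := blk_pow_le i
  have h2 := lt_pow_blk i
  have h3 : 2 ^ (blk i + 1) = 2 * 2 ^ blk i := by ring
  unfold bpos; omega

lemma blk_decomp (i : ℕ) : i = 2 ^ blk i - 1 + bpos i := by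
  have h1 := blk_pow_le i
  have h0 : 1 ≤ 2 ^ blk i := Nat.one_le_two_pow
  unfold bpos; omega

lemma blk_eq_of (b j : ℕ) (hj : j < 2 ^ b) :
    blk (2 ^ b - 1 + j) = b ∧ bpos (2 ^ b - 1 + j) = j := by
  have h1 : 1 ≤ 2 ^ b := Nat.one_le_two_pow
  have h2 : (2 ^ b - 1 + j) + 1 = 2 ^ b + j := by omega
  have hb : blk (2 ^ b - 1 + j) = b := by
    unfold blk
    rw [h2]
    exact Nat.log_eq_of_pow_le_of_lt_pow (by omega) (by
      have : 2 ^ (b + 1) = 2 * 2 ^ b := by ring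
      omega)
  refine ⟨hb, ?_⟩
  unfold bpos
  rw [hb, h2]
  omega

lemma blk_zero : blk 0 = 0 := by simp [blk]
lemma bpos_zero : bpos 0 = 0 := by simp [bpos, blk_zero]
lemma blk_one : blk 1 = 1 := by
  have := Nat.log_eq_of_pow_le_of_lt_pow (b := 2) (m := 1) (n := 2) (by norm_num) (by norm_num)
  simpa [blk] using this
lemma bpos_one : bpos 1 = 0 := by simp [bpos, blk_one]
lemma spc_zero : spc 0 = 1 := by simp [spc]
lemma spc_one : spc 1 = 1 := by simp [spc]
lemma spc_pos (b : ℕ) : 0 < spc b := inv_pos.mpr (pow_pos two_pos _)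
lemma spc_nonneg (b : ℕ) : 0 ≤ spc b := (spc_pos b).le

lemma same_block {m : ℕ} (hm : 1 ≤ bpos m) : blk (m - 1) = blk m ∧ bpos (m - 1) = bpos m - 1 := by
  have h1 := blk_pow_le m
  have h1' : 2 ^ blk m ≤ m := by unfold bpos at hm; omega
  have hm1 : 1 ≤ m := le_trans Nat.one_le_two_pow h1'
  have h0 : 1 ≤ 2 ^ blk m := Nat.one_le_two_pow
  have h2 := lt_pow_blk m
  have hb : blk (m - 1) = blk m := by
    unfold blk
    have : m - 1 + 1 = m := by omega
    rw [this]
    exact Nat.log_eq_of_pow_le_of_lt_pow h1' (by show m < 2 ^ (blk m + 1); omega)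
  refine ⟨hb, ?_⟩
  unfold bpos
  rw [hb]
  omega

lemma new_block {m : ℕ} (hm1 : 2 ≤ m) (hm : bpos m = 0) :
    m + 1 = 2 ^ blk m ∧ 2 ≤ blk m ∧ blk (m - 1) = blk m - 1 ∧
      bpos (m - 1) = 2 ^ (blk m - 1) - 1 := by
  have h1 := blk_pow_le m
  have heq : m + 1 = 2 ^ blk m := by unfold bpos at hm; omega
  have hb2 : 2 ≤ blk m := by
    by_contra hlt
    interval_cases h : blk m <;> omega
  have hpow : 2 ^ blk m = 2 * 2 ^ (blk m - 1) := by
    conv_lhs => rw [show blk m = (blk m - 1) + 1 by omega]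
    ring
  have hple : 2 ^ (blk m - 1) ≤ m - 1 + 1 := by omega
  have hblt : m - 1 + 1 < 2 ^ (blk m - 1 + 1) := by
    rw [show blk m - 1 + 1 = blk m by omega]; omega
  have hb : blk (m - 1) = blk m - 1 := Nat.log_eq_of_pow_le_of_lt_pow hple hblt
  refine ⟨heq, hb2, hb, ?_⟩
  unfold bpos
  rw [hb]
  omega

lemma blk_tendsto : Filter.Tendsto blk atTop atTop := by
  rw [tendsto_atTop_atTop]
  intro b
  refine ⟨2 ^ b, fun a ha => ?_⟩
  have : 2 ^ b ≤ a + 1 := by omega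
  exact (Nat.le_log_iff_pow_le (by norm_num) (Nat.succ_ne_zero a)).mpr this

lemma spc_blk_tendsto : Filter.Tendsto (fun m => spc (blk (m - 1))) atTop (nhds 0) := by
  have h1 : Filter.Tendsto (fun b : ℕ => ((2:ℝ) ^ (b - 1))) atTop atTop := by
    apply Filter.Tendsto.comp (tendsto_pow_atTop_atTop_of_one_lt (by norm_num : (1:ℝ) < 2))
    exact tendsto_sub_atTop_nat 1
  have h2 : Filter.Tendsto (fun b : ℕ => spc b) atTop (nhds 0) := h1.inv_tendsto_atTop
  exact h2.comp (blk_tendsto.comp (tendsto_sub_atTop_nat 1))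

/-- the bet coefficients -/
noncomputable def bcoef (p : ℕ → ℝ) (i : ℕ) : ℝ :=
  if 2 ∣ bpos i then spc (blk i) * (p (blk i))⁻¹ else -(spc (blk i) * (p (blk i - 1))⁻¹)

/-- the bet sets -/
def bset (E : ℕ → Set Ω) (i : ℕ) : Set Ω :=
  if 2 ∣ bpos i then E (blk i) else E (blk i - 1)

/-- the price terms -/
noncomputable def bpr (i : ℕ) : ℝ := if 2 ∣ bpos i then spc (blk i) else -spc (blk i)

/-- closed form of price partial sums -/
noncomputable def bg (m : ℕ) : ℝ :=
  if m = 0 then 0 else if m = 1 then 1 else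
    1 + (if 2 ∣ bpos (m - 1) then spc (blk (m - 1)) else 0)

lemma sum_bpr (m : ℕ) : ∑ i ∈ Finset.range m, bpr i = bg m := by
  induction m with
  | zero => simp [bg]
  | succ m ih =>
      rw [Finset.sum_range_succ, ih]
      rcases Nat.eq_zero_or_pos m with rfl | hm1
      · simp [bg, bpr, bpos_zero, blk_zero, spc_zero]
      rcases eq_or_lt_of_le (Nat.succ_le_of_lt hm1) with rfl | hm2
      · norm_num [bg, bpr, bpos_one, blk_one, spc_one]
      -- m ≥ 2
      have hm2' : 2 ≤ m := hm2
      have hmsub : m + 1 - 1 = m := by omega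
      by_cases hp : 1 ≤ bpos m
      · obtain ⟨hb, hq⟩ := same_block hp
        by_cases he : 2 ∣ bpos m
        · have ho : ¬ 2 ∣ bpos (m - 1) := by rw [hq]; omega
          simp only [bg, bpr, if_neg (by omega : ¬ m = 0), if_neg (by omega : ¬ m = 1),
            if_neg (by omega : ¬ m + 1 = 0), if_neg (by omega : ¬ m + 1 = 1),
            hmsub, if_pos he, if_neg ho]
          ring
        · have ho : 2 ∣ bpos (m - 1) := by rw [hq]; omega
          simp only [bg, bpr, if_neg (by omega : ¬ m = 0), if_neg (by omega : ¬ m = 1),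
            if_neg (by omega : ¬ m + 1 = 0), if_neg (by omega : ¬ m + 1 = 1),
            hmsub, if_neg he, if_pos ho, hb]
          ring
      · have hp0 : bpos m = 0 := by omega
        obtain ⟨heq, hb2, hb, hq⟩ := new_block hm2' hp0
        have ho : ¬ 2 ∣ bpos (m - 1) := by
          rw [hq]
          have : 2 ∣ 2 ^ (blk m - 1) := dvd_pow_self 2 (by omega : blk m - 1 ≠ 0)
          have h1 : (1:ℕ) ≤ 2 ^ (blk m - 1) := Nat.one_le_two_pow
          omega
        simp only [bg, bpr, if_neg (by omega : ¬ m = 0), if_neg (by omega : ¬ m = 1),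
          if_neg (by omega : ¬ m + 1 = 0), if_neg (by omega : ¬ m + 1 = 1),
          hmsub, if_pos (by omega : 2 ∣ bpos m), if_neg ho]
        ring

lemma bpr_tendsTo : SeriesTendsTo bpr 1 := by
  unfold SeriesTendsTo
  have key : Filter.Tendsto (fun m => (∑ i ∈ Finset.range m, bpr i) - 1) atTop (nhds 0) := by
    refine squeeze_zero_norm' ?_ spc_blk_tendsto
    · rw [Filter.eventually_atTop]
      refine ⟨1, fun m hm => ?_⟩
      rw [sum_bpr]
      rcases eq_or_lt_of_le hm with rfl | hm2
      · simp [bg, spc_nonneg]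
      have : ¬ m = 0 := by omega
      have h1 : ¬ m = 1 := by omega
      simp only [bg, if_neg this, if_neg h1]
      by_cases he : 2 ∣ bpos (m - 1)
      · rw [if_pos he]
        simp [abs_of_nonneg (spc_nonneg _)]
      · rw [if_neg he]
        simp [spc_nonneg]
  have := key.add_const 1
  simpa using this

end Bump

section Bump2

variable {C : Set (Set Ω)} {P : Set Ω → ℝ}

lemma sum_ite_even (x y : ℝ) (k : ℕ) :
    ∑ j ∈ Finset.range (2 * k), (if 2 ∣ j then x else y) = k * (x + y) := by
  induction k with
  | zero => simp
  | succ k ih =>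
      have h2 : 2 * (k + 1) = (2 * k + 1) + 1 := by ring
      rw [h2, Finset.sum_range_succ, Finset.sum_range_succ, ih,
        if_pos (by omega : 2 ∣ 2 * k), if_neg (by omega : ¬ 2 ∣ 2 * k + 1)]
      push_cast
      ring

variable (E : ℕ → Set Ω) (p : ℕ → ℝ)

lemma bterm_eval (ω : Ω) (i : ℕ) :
    bcoef p i * ind (bset E i) ω =
      if 2 ∣ bpos i then spc (blk i) * ((p (blk i))⁻¹ * ind (E (blk i)) ω)
      else -(spc (blk i) * ((p (blk i - 1))⁻¹ * ind (E (blk i - 1)) ω)) := by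
  by_cases h : 2 ∣ bpos i <;> simp [bcoef, bset, h] <;> ring

lemma block_sum (ω : Ω) {b : ℕ} (hb : 1 ≤ b) :
    ∑ i ∈ Finset.Ico (2 ^ b - 1) (2 ^ (b + 1) - 1), bcoef p i * ind (bset E i) ω
      = (p b)⁻¹ * ind (E b) ω - (p (b - 1))⁻¹ * ind (E (b - 1)) ω := by
  have h1 : 1 ≤ 2 ^ b := Nat.one_le_two_pow
  have hpow : 2 ^ (b + 1) = 2 * 2 ^ b := by ring
  have hlen : 2 ^ (b + 1) - 1 - (2 ^ b - 1) = 2 ^ b := by omega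
  rw [Finset.sum_Ico_eq_sum_range, hlen]
  have hterm : ∀ j ∈ Finset.range (2 ^ b),
      bcoef p (2 ^ b - 1 + j) * ind (bset E (2 ^ b - 1 + j)) ω
        = if 2 ∣ j then spc b * ((p b)⁻¹ * ind (E b) ω)
          else -(spc b * ((p (b - 1))⁻¹ * ind (E (b - 1)) ω)) := by
    intro j hj
    obtain ⟨hblk, hpos⟩ := blk_eq_of b j (Finset.mem_range.mp hj)
    rw [bterm_eval, hblk, hpos]
  rw [Finset.sum_congr rfl hterm]
  have h2b : 2 ^ b = 2 * 2 ^ (b - 1) := by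
    conv_lhs => rw [show b = (b - 1) + 1 by omega]
    ring
  rw [h2b, sum_ite_even]
  have hcast : ((2:ℝ) ^ (b - 1)) * spc b = 1 := by
    rw [spc]
    exact mul_inv_cancel₀ (by positivity)
  push_cast
  linear_combination ((p b)⁻¹ * ind (E b) ω - (p (b - 1))⁻¹ * ind (E (b - 1)) ω) * hcast

lemma prefix_sum (ω : Ω) (B : ℕ) :
    ∑ i ∈ Finset.range (2 ^ (B + 1) - 1), bcoef p i * ind (bset E i) ω
      = (p B)⁻¹ * ind (E B) ω := by
  induction B with
  | zero =>
      rw [show (2:ℕ) ^ (0 + 1) - 1 = 1 by norm_num]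
      rw [Finset.sum_range_one, bterm_eval]
      simp [bpos_zero, blk_zero, spc_zero]
  | succ B ih =>
      have h1 : 1 ≤ 2 ^ (B + 1) := Nat.one_le_two_pow
      have h2 : 2 ^ (B + 1) - 1 ≤ 2 ^ (B + 2) - 1 := by
        have : (2:ℕ) ^ (B + 2) = 2 * 2 ^ (B + 1) := by ring
        omega
      rw [← Finset.sum_range_add_sum_Ico _ h2, ih, block_sum E p ω (Nat.le_add_left 1 B)]
      simp only [Nat.add_sub_cancel]
      ring
end Bump2

section Bump3

variable {C : Set (Set Ω)} {P : Set Ω → ℝ}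

lemma dutch_of_family (hC : IsSetField C) (E : ℕ → Set Ω) (hE : ∀ k, E k ∈ C)
    (hdisj : Pairwise (Function.onFun Disjoint E)) (hpos : ∀ k, 0 < P (E k)) :
    IncoherentIn P (System3 C P) := by
  have hpne : ∀ k, (fun k => P (E k)) k ≠ 0 := fun k => (hpos k).ne'
  set p : ℕ → ℝ := fun k => P (E k) with hp
  have hprice_eq : (fun i => bcoef p i * P (bset E i)) = bpr := by
    funext i
    by_cases h : 2 ∣ bpos i
    · show bcoef p i * P (bset E i) = bpr i
      rw [bcoef, bset, bpr, if_pos h, if_pos h, if_pos h, mul_assoc,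
        inv_mul_cancel₀ (hpne _), mul_one]
    · show bcoef p i * P (bset E i) = bpr i
      rw [bcoef, bset, bpr, if_neg h, if_neg h, if_neg h, neg_mul, mul_assoc,
        inv_mul_cancel₀ (hpne _), mul_one]
  have hprice : SeriesTendsTo (fun i => bcoef p i * P (bset E i)) 1 := by
    rw [hprice_eq]; exact bpr_tendsTo
  have hind : ∀ ω, SeriesTendsTo (fun i => bcoef p i * ind (bset E i) ω) 0 := by
    intro ω
    by_cases hω : ∃ m, ω ∈ E m
    · obtain ⟨m, hm⟩ := hω
      have hnot : ∀ k, k ≠ m → ω ∉ E k := fun k hk hmem =>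
        Set.disjoint_left.mp (hdisj hk) hmem hm
      have hz : ∀ i, 2 ^ (m + 1 + 1) - 1 ≤ i → bcoef p i * ind (bset E i) ω = 0 := by
        intro i hi
        have h1 : 2 ^ (m + 1 + 1) ≤ i + 1 := by
          have : 1 ≤ 2 ^ (m + 1 + 1) := Nat.one_le_two_pow
          omega
        have hblk : m + 1 + 1 ≤ blk i :=
          (Nat.le_log_iff_pow_le (by norm_num) (Nat.succ_ne_zero i)).mpr h1
        have hmem : ω ∉ bset E i := by
          unfold bset
          by_cases h : 2 ∣ bpos i
          · rw [if_pos h]; exact hnot _ (by omega)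
          · rw [if_neg h]; exact hnot _ (by omega)
        rw [ind_of_not_mem hmem, mul_zero]
      have h0 := seriesTendsTo_of_eventually_zero hz
      rw [prefix_sum E p ω (m + 1)] at h0
      rwa [ind_of_not_mem (hnot (m + 1) (by omega)), mul_zero] at h0
    · push_neg at hω
      have hz : ∀ i, 0 ≤ i → bcoef p i * ind (bset E i) ω = 0 := by
        intro i _
        have hmem : ω ∉ bset E i := by
          unfold bset; by_cases h : 2 ∣ bpos i <;> simp [h, hω]
        rw [ind_of_not_mem hmem, mul_zero]
      simpa using seriesTendsTo_of_eventually_zero hz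
  have hfun : ∀ ω, bterm P (bcoef p) (bset E) ω
      = fun i => bcoef p i * ind (bset E i) ω - bcoef p i * P (bset E i) :=
    fun ω => funext fun i => by simp [bterm, mul_sub]
  refine ⟨bcoef p, bset E, ⟨?_, ⟨1, hprice⟩, ?_⟩, 1, one_pos, ?_⟩
  · intro i; unfold bset; by_cases h : 2 ∣ bpos i <;> simp [h, hE]
  · intro ω
    refine ⟨0 - 1, ?_⟩
    have h2 := (hind ω).sub hprice
    rwa [hfun ω]
  · intro ω
    refine ⟨0 - 1, ?_, by norm_num⟩
    have h2 := (hind ω).sub hprice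
    rwa [hfun ω]

end Bump3

section Atoms

variable {C : Set (Set Ω)} {P : Set Ω → ℝ}

lemma atom_absorb_null (hC : IsSetField C) (hfa : FinAdd C P) (hnn : ∀ A ∈ C, 0 ≤ P A)
    {F Z : Set Ω} (hF : IsPAtom C P F) (hZ : Z ∈ C) (hZ0 : P Z = 0) :
    IsPAtom C P (F ∪ Z) := by
  obtain ⟨hFC, hFpos, hFat⟩ := hF
  have hmemU : F ∪ Z ∈ C := hC.2.2 _ hFC _ hZ
  have hPU : P (F ∪ Z) = P F := by
    have h1 : F ∪ (Z \ F) = F ∪ Z := Set.union_diff_self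
    have h2 := hfa F hFC (Z \ F) (hC.diff_mem hZ hFC) Set.disjoint_sdiff_right
    rw [h1] at h2
    have h3 : P (Z \ F) ≤ P Z :=
      P_mono hC hfa hnn hZ (hC.diff_mem hZ hFC) Set.diff_subset
    have h4 : 0 ≤ P (Z \ F) := hnn _ (hC.diff_mem hZ hFC)
    rw [h2]; linarith
  refine ⟨hmemU, by rw [hPU]; exact hFpos, ?_⟩
  intro B hB hsub
  have hBF : B ∩ F ∈ C := hC.inter_mem hB hFC
  have hBdF : B \ F ∈ C := hC.diff_mem hB hFC
  have hdecomp : (B ∩ F) ∪ (B \ F) = B := Set.inter_union_diff B F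
  have hd : Disjoint (B ∩ F) (B \ F) :=
    Disjoint.mono_left Set.inter_subset_right Set.disjoint_sdiff_right
  have h5 := hfa _ hBF _ hBdF hd
  rw [hdecomp] at h5
  have h6 : B \ F ⊆ Z := by
    intro x hx
    rcases hsub hx.1 with h | h
    · exact absurd h hx.2
    · exact h
  have h7 : P (B \ F) = 0 := by
    have := P_mono hC hfa hnn hZ hBdF h6
    have := hnn _ hBdF
    linarith
  have h8 : P B = P (B ∩ F) := by rw [h5, h7]; ring
  rcases hFat (B ∩ F) hBF Set.inter_subset_right with h | h
  · left; rw [h8, h, hPU]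
  · right; rw [h8, h]

lemma partition_of_no_family (hC : IsSetField C) (hfa : FinAdd C P)
    (hnn : ∀ A ∈ C, 0 ≤ P A) (h1 : P Set.univ = 1)
    (hnofam : ¬ ∃ E : ℕ → Set Ω, (∀ k, E k ∈ C) ∧ Pairwise (Function.onFun Disjoint E) ∧
      ∀ k, 0 < P (E k)) :
    FiniteAtomicPartition C P := by
  classical
  -- step 1 : every positive set contains an atom
  have hatom : ∀ G, G ∈ C → 0 < P G → ∃ F, F ⊆ G ∧ IsPAtom C P F := by
    intro G hG hGpos
    by_contra hno
    push_neg at hno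
    have hsplit : ∀ B, B ∈ C ∧ B ⊆ G ∧ 0 < P B →
        ∃ B', B' ∈ C ∧ B' ⊆ B ∧ 0 < P B' ∧ P B' < P B := by
      rintro B ⟨hB, hBG, hBpos⟩
      have hnotatom : ¬ IsPAtom C P B := fun h => hno B hBG h
      rw [IsPAtom] at hnotatom
      push_neg at hnotatom
      obtain ⟨B', hB'C, hB'sub, hne1, hne2⟩ := hnotatom hB hBpos
      refine ⟨B', hB'C, hB'sub, ?_, ?_⟩
      · rcases lt_or_eq_of_le (hnn _ hB'C) with h | h
        · exact h
        · exact absurd h.symm hne2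
      · rcases lt_or_eq_of_le (P_mono hC hfa hnn hB hB'C hB'sub) with h | h
        · exact h
        · exact absurd h hne1
    set nxt : Set Ω → Set Ω := fun B =>
      if h : B ∈ C ∧ B ⊆ G ∧ 0 < P B then (hsplit B h).choose else ∅ with hnxt
    have hnxtspec : ∀ B (h : B ∈ C ∧ B ⊆ G ∧ 0 < P B),
        nxt B ∈ C ∧ nxt B ⊆ B ∧ 0 < P (nxt B) ∧ P (nxt B) < P B := by
      intro B h
      rw [hnxt]; simp only [dif_pos h]
      exact (hsplit B h).choose_spec
    set R : ℕ → Set Ω := fun k => Nat.rec G (fun _ Rk => Rk \ nxt Rk) k with hR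
    have hRstep : ∀ k, R (k + 1) = R k \ nxt (R k) := fun k => rfl
    have hRinv : ∀ k, R k ∈ C ∧ R k ⊆ G ∧ 0 < P (R k) := by
      intro k
      induction k with
      | zero => exact ⟨hG, le_refl _, hGpos⟩
      | succ k ih =>
          obtain ⟨hN1, hN2, hN3, hN4⟩ := hnxtspec (R k) ih
          refine ⟨hC.diff_mem ih.1 hN1, Set.Subset.trans Set.diff_subset ih.2.1, ?_⟩
          rw [hRstep, P_diff hC hfa ih.1 hN1 hN2]
          linarith
    have hRanti : ∀ k l, k ≤ l → R l ⊆ R k := by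
      intro k l hkl
      induction l with
      | zero => obtain rfl := Nat.le_zero.mp hkl; exact subset_rfl
      | succ l ih =>
          rcases Nat.lt_or_ge k (l + 1) with h | h
          · exact Set.Subset.trans (by rw [hRstep]; exact Set.diff_subset)
              (ih (by omega))
          · rw [Nat.le_antisymm hkl h]
    apply hnofam
    refine ⟨fun k => nxt (R k), fun k => (hnxtspec _ (hRinv k)).1, ?_,
      fun k => (hnxtspec _ (hRinv k)).2.2.1⟩
    intro i j hij
    rcases Nat.lt_or_ge i j with h | h
    · have h2 : nxt (R j) ⊆ R i \ nxt (R i) := by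
        refine Set.Subset.trans (hnxtspec _ (hRinv j)).2.1 ?_
        rw [← hRstep]
        exact hRanti _ _ h
      exact Disjoint.mono_right h2 Set.disjoint_sdiff_right
    · have h' : j < i := by omega
      have h2 : nxt (R i) ⊆ R j \ nxt (R j) := by
        refine Set.Subset.trans (hnxtspec _ (hRinv i)).2.1 ?_
        rw [← hRstep]
        exact hRanti _ _ h'
      exact Disjoint.mono_left h2 Set.disjoint_sdiff_left
  -- step 2 : the atomic recursion
  set pick : Set Ω → Set Ω := fun B =>
    if h : B ∈ C ∧ 0 < P B then (hatom B h.1 h.2).choose else ∅ with hpick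
  have hpickC : ∀ B, B ∈ C → pick B ∈ C := by
    intro B hB
    rw [hpick]
    by_cases h : B ∈ C ∧ 0 < P B
    · simp only [dif_pos h]; exact (hatom B h.1 h.2).choose_spec.2.1
    · simp only [dif_neg h]; exact hC.empty_mem
  have hpickspec : ∀ B (h : B ∈ C ∧ 0 < P B),
      pick B ⊆ B ∧ IsPAtom C P (pick B) := by
    intro B h
    rw [hpick]; simp only [dif_pos h]
    exact (hatom B h.1 h.2).choose_spec
  set R : ℕ → Set Ω := fun k => Nat.rec Set.univ (fun _ Rk => Rk \ pick Rk) k with hR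
  have hRstep : ∀ k, R (k + 1) = R k \ pick (R k) := fun k => rfl
  have hRC : ∀ k, R k ∈ C := by
    intro k
    induction k with
    | zero => exact hC.1
    | succ k ih => exact hC.diff_mem ih (hpickC _ ih)
  have hterm : ∃ k, ¬ 0 < P (R k) := by
    by_contra hall
    push_neg at hall
    apply hnofam
    refine ⟨fun k => pick (R k), fun k => hpickC _ (hRC k), ?_, ?_⟩
    · intro i j hij
      have key : ∀ a b : ℕ, a < b → Disjoint (pick (R a)) (pick (R b)) := by
        intro a b hab
        have hanti : ∀ k l : ℕ, k ≤ l → R l ⊆ R k := by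
          intro k l hkl
          induction l with
          | zero => obtain rfl := Nat.le_zero.mp hkl; exact subset_rfl
          | succ l ih =>
              rcases Nat.lt_or_ge k (l + 1) with h | h
              · exact Set.Subset.trans (by rw [hRstep]; exact Set.diff_subset)
                  (ih (by omega))
              · rw [Nat.le_antisymm hkl h]
        have h2 : pick (R b) ⊆ R a \ pick (R a) := by
          refine Set.Subset.trans (hpickspec _ ⟨hRC b, hall b⟩).1 ?_
          rw [← hRstep]
          exact hanti _ _ hab
        exact Disjoint.mono_right h2 Set.disjoint_sdiff_right
      rcases Nat.lt_or_ge i j with h | h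
      · exact key i j h
      · exact (key j i (by omega)).symm
    · intro k
      exact (hpickspec _ ⟨hRC k, hall k⟩).2.2.1
  set n := Nat.find hterm with hn
  have hnspec : ¬ 0 < P (R n) := Nat.find_spec hterm
  have hnmin : ∀ j, j < n → 0 < P (R j) := fun j hj => by
    by_contra h
    exact absurd (Nat.find_min hterm hj) (by simp [h])
  have hRn0 : P (R n) = 0 := le_antisymm (not_lt.mp hnspec) (hnn _ (hRC n))
  have hn1 : 1 ≤ n := by
    rcases Nat.eq_zero_or_pos n with h | h
    · exfalso; apply hnspec; rw [h]; show 0 < P Set.univ; rw [h1]; norm_num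
    · exact h
  -- the partition
  have hAat : ∀ j, j < n → IsPAtom C P (pick (R j)) :=
    fun j hj => (hpickspec _ ⟨hRC j, hnmin j hj⟩).2
  have hAsub : ∀ j, j < n → pick (R j) ⊆ R j :=
    fun j hj => (hpickspec _ ⟨hRC j, hnmin j hj⟩).1
  have hanti : ∀ k l : ℕ, k ≤ l → R l ⊆ R k := by
    intro k l hkl
    induction l with
    | zero => obtain rfl := Nat.le_zero.mp hkl; exact subset_rfl
    | succ l ih =>
        rcases Nat.lt_or_ge k (l + 1) with h | h
        · exact Set.Subset.trans (by rw [hRstep]; exact Set.diff_subset) (ih (by omega))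
        · rw [Nat.le_antisymm hkl h]
  have hdisjAR : ∀ a b : ℕ, a < b → b ≤ n → Disjoint (pick (R a)) (R b) := by
    intro a b hab hbn
    have h2 : R b ⊆ R a \ pick (R a) := by
      rw [← hRstep]
      exact hanti _ _ hab
    exact Disjoint.mono_right h2 Set.disjoint_sdiff_right
  have hpicksub : ∀ B, pick B ⊆ B := by
    intro B
    rw [hpick]
    by_cases h : B ∈ C ∧ 0 < P B
    · simp only [dif_pos h]; exact (hatom B h.1 h.2).choose_spec.1
    · simp only [dif_neg h]; exact Set.empty_subset B
  have hcover : ∀ k, (⋃ j ∈ Finset.range k, pick (R j)) ∪ R k = Set.univ := by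
    intro k
    induction k with
    | zero => simp; rfl
    | succ k ih =>
        rw [Finset.range_add_one, Finset.set_biUnion_insert, Set.union_comm (pick (R k)),
          Set.union_assoc]
        have hx : pick (R k) ∪ R (k + 1) = R k := by
          rw [hRstep]
          exact Set.union_diff_cancel (hpicksub _)
        rw [hx]
        exact ih
  set Fn : Fin n → Set Ω := fun j =>
    if j.val = n - 1 then pick (R j.val) ∪ R n else pick (R j.val) with hFn
  have hFnsub : ∀ j : Fin n, Fn j ⊆ pick (R j.val) ∪ R n := by
    intro j
    simp only [hFn]
    by_cases h : j.val = n - 1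
    · rw [if_pos h]
    · rw [if_neg h]; exact Set.subset_union_left
  have key : ∀ s t : Fin n, s.val < t.val → Disjoint (Fn s) (Fn t) := by
    intro s t hst
    have hs : ¬ (s.val = n - 1) := by have := t.isLt; omega
    have hAB : Disjoint (pick (R s.val)) (pick (R t.val)) :=
      Disjoint.mono_right (hAsub t.val t.isLt) (hdisjAR s.val t.val hst (le_of_lt t.isLt))
    have hAR : Disjoint (pick (R s.val)) (R n) := hdisjAR s.val n (by omega) (le_refl n)
    have hU : Disjoint (pick (R s.val)) (pick (R t.val) ∪ R n) :=
      Set.disjoint_union_right.mpr ⟨hAB, hAR⟩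
    have hFs : Fn s = pick (R s.val) := by simp only [hFn]; exact if_neg hs
    rw [hFs]
    exact Disjoint.mono_right (hFnsub t) hU
  refine ⟨n, Fn, ?_, ?_, ?_⟩
  · intro j
    simp only [hFn]
    by_cases h : j.val = n - 1
    · rw [if_pos h]
      exact atom_absorb_null hC hfa hnn (hAat j.val j.isLt) (hRC n) hRn0
    · rw [if_neg h]
      exact hAat j.val j.isLt
  · intro i j hij
    rcases lt_trichotomy i.val j.val with h | h | h
    · exact key i j h
    · exact absurd (Fin.ext h) hij
    · exact (key j i h).symm
  · apply Set.eq_univ_of_univ_subset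
    rw [← hcover n]
    intro x hx
    rcases hx with hx | hx
    · simp only [Set.mem_iUnion, Finset.mem_range] at hx
      obtain ⟨j, hj, hxj⟩ := hx
      refine Set.mem_iUnion.mpr ⟨⟨j, hj⟩, ?_⟩
      simp only [hFn]
      by_cases h : j = n - 1
      · simp only [if_pos h]; exact Or.inl hxj
      · simp only [if_neg h]; exact hxj
    · have hlt : n - 1 < n := by omega
      refine Set.mem_iUnion.mpr ⟨⟨n - 1, hlt⟩, ?_⟩
      simp only [hFn]
      split
      · exact Or.inr hx
      · next hne => exact absurd trivial hne

end Atoms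

section Converse

variable {C : Set (Set Ω)} {P : Set Ω → ℝ}

lemma sum_partition (hC : IsSetField C) (hfa : FinAdd C P) {n : ℕ} {F : Fin n → Set Ω}
    (hFC : ∀ j, F j ∈ C) (hdisj : Pairwise (Function.onFun Disjoint F))
    (hcov : (⋃ j, F j) = Set.univ) {B : Set Ω} (hB : B ∈ C) :
    ∑ j : Fin n, P (B ∩ F j) = P B := by
  classical
  set G : ℕ → Set Ω := fun k => if h : k < n then B ∩ F ⟨k, h⟩ else ∅ with hG
  have hGC : ∀ k, G k ∈ C := by
    intro k; rw [hG]
    by_cases h : k < n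
    · simp only [dif_pos h]; exact hC.inter_mem hB (hFC _)
    · simp only [dif_neg h]; exact hC.empty_mem
  have hGdisj : ∀ i j, i ≠ j → Disjoint (G i) (G j) := by
    intro i j hij
    rw [hG]
    by_cases hi : i < n
    · by_cases hj : j < n
      · simp only [dif_pos hi, dif_pos hj]
        have hd : Disjoint (F ⟨i, hi⟩) (F ⟨j, hj⟩) :=
          hdisj (fun h => hij (Fin.mk.inj_iff.mp h))
        exact Disjoint.mono Set.inter_subset_right Set.inter_subset_right hd
      · simp only [dif_pos hi, dif_neg hj]; exact Set.disjoint_empty _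
    · simp only [dif_neg hi]; exact Set.empty_disjoint _
  have hunion : (⋃ k ∈ Finset.range n, G k) = B := by
    ext x
    simp only [Set.mem_iUnion, Finset.mem_range]
    constructor
    · rintro ⟨k, hk, hx⟩
      rw [hG] at hx; simp only [dif_pos hk] at hx
      exact hx.1
    · intro hx
      have hx2 : x ∈ ⋃ j, F j := by rw [hcov]; trivial
      obtain ⟨j, hj⟩ := Set.mem_iUnion.mp hx2
      refine ⟨j.val, j.isLt, ?_⟩
      rw [hG]; simp only [dif_pos j.isLt]
      exact ⟨hx, by rw [Fin.eta]; exact hj⟩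
  have hPU := P_partial_union hC hfa hGC hGdisj n
  rw [hunion] at hPU
  rw [hPU, Finset.sum_range]
  apply Finset.sum_congr rfl
  intro j _
  rw [hG]; simp only [dif_pos j.isLt, Fin.eta]

lemma atom_point (hC : IsSetField C) (hfa : FinAdd C P) (hnn : ∀ A ∈ C, 0 ≤ P A)
    (hca : ∀ A : ℕ → Set Ω, (∀ i, A i ∈ C) → Pairwise (Function.onFun Disjoint A) →
      (⋃ i, A i) ∈ C → HasSum (fun i => P (A i)) (P (⋃ i, A i)))
    {F : Set Ω} (hF : IsPAtom C P F) {A : ℕ → Set Ω} (hA : ∀ i, A i ∈ C) :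
    ∃ ω ∈ F, ∀ i, (ω ∈ A i ↔ P (A i ∩ F) = P F) := by
  classical
  obtain ⟨hFC, hFpos, hFat⟩ := hF
  by_contra hno
  push_neg at hno
  set N : ℕ → Set Ω := fun i => if P (A i ∩ F) = P F then F \ A i else A i ∩ F with hN
  have hNC : ∀ i, N i ∈ C := by
    intro i; rw [hN]
    by_cases h : P (A i ∩ F) = P F
    · simp only [if_pos h]; exact hC.diff_mem hFC (hA i)
    · simp only [if_neg h]; exact hC.inter_mem (hA i) hFC
  have hNsub : ∀ i, N i ⊆ F := by
    intro i; rw [hN]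
    by_cases h : P (A i ∩ F) = P F
    · simp only [if_pos h]; exact Set.diff_subset
    · simp only [if_neg h]; exact Set.inter_subset_right
  have hN0 : ∀ i, P (N i) = 0 := by
    intro i; rw [hN]
    have hsplit := hfa _ (hC.inter_mem (hA i) hFC) _ (hC.diff_mem hFC (hA i))
      (Disjoint.mono_left Set.inter_subset_left Set.disjoint_sdiff_right)
    have hcup : (A i ∩ F) ∪ (F \ A i) = F := by
      ext x
      simp only [Set.mem_union, Set.mem_inter_iff, Set.mem_diff]
      constructor
      · rintro (⟨_, h2⟩ | ⟨h1, _⟩) <;> assumption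
      · intro hx
        by_cases h : x ∈ A i
        · exact Or.inl ⟨h, hx⟩
        · exact Or.inr ⟨hx, h⟩
    rw [hcup] at hsplit
    by_cases h : P (A i ∩ F) = P F
    · simp only [if_pos h]; linarith
    · simp only [if_neg h]
      rcases hFat (A i ∩ F) (hC.inter_mem (hA i) hFC) Set.inter_subset_right with h' | h'
      · exact absurd h' h
      · exact h'
  have hNcov : (⋃ i, N i) = F := by
    apply Set.Subset.antisymm (Set.iUnion_subset hNsub)
    intro x hx
    obtain ⟨i, hi⟩ := hno x hx
    rw [Set.mem_iUnion]
    refine ⟨i, ?_⟩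
    rw [hN]
    by_cases h : P (A i ∩ F) = P F
    · simp only [if_pos h]
      rcases hi with ⟨_, hne⟩ | ⟨hnm, _⟩
      · exact absurd h hne
      · exact ⟨hx, hnm⟩
    · simp only [if_neg h]
      rcases hi with ⟨hm, _⟩ | ⟨_, heq⟩
      · exact ⟨hm, hx⟩
      · exact absurd heq h
  have hpsC : ∀ i, (partialSups N i : Set Ω) ∈ C := by
    intro i
    induction i with
    | zero => simpa [partialSups_zero] using hNC 0
    | succ i ih =>
        rw [partialSups_add_one]
        exact hC.2.2 _ ih _ (hNC (i + 1))
  have hdC : ∀ i, disjointed N i ∈ C := by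
    intro i
    cases i with
    | zero => simpa [disjointed_zero] using hNC 0
    | succ i =>
        rw [disjointed_add_one]
        exact hC.diff_mem (hNC (i + 1)) (hpsC i)
  have hsum := hca (disjointed N) hdC (disjoint_disjointed N)
    (by rw [iUnion_disjointed, hNcov]; exact hFC)
  rw [iUnion_disjointed, hNcov] at hsum
  have hz : ∀ i, P (disjointed N i) = 0 := by
    intro i
    have h1 : P (disjointed N i) ≤ P (N i) :=
      P_mono hC hfa hnn (hNC i) (hdC i) (disjointed_subset N i)
    have h2 : 0 ≤ P (disjointed N i) := hnn _ (hdC i)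
    rw [← hN0 i]
    have := hN0 i
    linarith [hN0 i]
  have hzero : HasSum (fun _ : ℕ => (0:ℝ)) (P F) := by
    have : (fun i => P (disjointed N i)) = fun _ : ℕ => (0:ℝ) := funext hz
    rwa [this] at hsum
  have := hzero.unique hasSum_zero
  linarith

end Converse

section ConverseMain

variable {C : Set (Set Ω)} {P : Set Ω → ℝ}

lemma coherent_of_ca_partition (hC : IsSetField C) (hP : IsCAProb C P)
    (hpart : FiniteAtomicPartition C P) : CoherentIn P (System3 C P) := by
  obtain ⟨hP1, hnn, hfa', hca⟩ := hP
  have hfa : FinAdd C P := hfa'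
  obtain ⟨n, F, hatoms, hFdisj, hFcov⟩ := hpart
  rintro ⟨α, A, ⟨hAC, hprice, hconv⟩, ε, hε, hloss⟩
  rcases Nat.eq_zero_or_pos n with rfl | hn
  · have hempty : (Set.univ : Set Ω) = ∅ := by
      rw [← hFcov, Set.iUnion_of_empty]
    have hd : Disjoint (Set.univ : Set Ω) Set.univ := by rw [hempty]; simp
    have h2 := hfa _ hC.1 _ hC.1 hd
    rw [Set.union_self, hP1] at h2
    linarith
  have hpts : ∀ j : Fin n, ∃ ω ∈ F j, ∀ i, (ω ∈ A i ↔ P (A i ∩ F j) = P (F j)) :=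
    fun j => atom_point hC hfa hnn hca (hatoms j) hAC
  choose ω hωF hωA using hpts
  choose L hL hLle using fun j => hloss (ω j)
  have hqpos : ∀ j, 0 < P (F j) := fun j => (hatoms j).2.1
  have hqsum : ∑ j, P (F j) = 1 := by
    have h2 := sum_partition hC hfa (fun j => (hatoms j).1) hFdisj hFcov hC.1
    simp only [Set.univ_inter] at h2
    rw [h2, hP1]
  have hkey : ∀ m, ∑ j, P (F j) * (∑ i ∈ Finset.range m, bterm P α A (ω j) i) = 0 := by
    intro m
    have h1 : ∀ j : Fin n, P (F j) * (∑ i ∈ Finset.range m, bterm P α A (ω j) i)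
        = ∑ i ∈ Finset.range m, P (F j) * bterm P α A (ω j) i :=
      fun j => Finset.mul_sum _ _ _
    simp only [h1]
    rw [Finset.sum_comm]
    apply Finset.sum_eq_zero
    intro i _
    have hterm : ∀ j : Fin n, P (F j) * bterm P α A (ω j) i
        = α i * (P (A i ∩ F j) - P (A i) * P (F j)) := by
      intro j
      rw [bterm]
      by_cases h : ω j ∈ A i
      · rw [ind_of_mem h, (hωA j i).mp h]
        ring
      · rw [ind_of_not_mem h]
        have h0 : P (A i ∩ F j) = 0 := by
          rcases (hatoms j).2.2 (A i ∩ F j) (hC.inter_mem (hAC i) (hatoms j).1)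
            Set.inter_subset_right with h' | h'
          · exact absurd ((hωA j i).mpr h') h
          · exact h'
        rw [h0]
        ring
    simp only [hterm]
    rw [← Finset.mul_sum, Finset.sum_sub_distrib, ← Finset.mul_sum, hqsum,
      sum_partition hC hfa (fun j => (hatoms j).1) hFdisj hFcov (hAC i)]
    ring
  have hlim : Filter.Tendsto
      (fun m => ∑ j, P (F j) * (∑ i ∈ Finset.range m, bterm P α A (ω j) i)) atTop
      (nhds (∑ j, P (F j) * L j)) := by
    apply tendsto_finset_sum
    intro j _
    exact (hL j).const_mul _
  have h0 : (∑ j, P (F j) * L j) = 0 := by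
    apply tendsto_nhds_unique hlim
    simp only [hkey]
    exact tendsto_const_nhds
  have hle : ∑ j, P (F j) * L j ≤ -ε := by
    calc ∑ j, P (F j) * L j ≤ ∑ j, P (F j) * (-ε) := by
          apply Finset.sum_le_sum
          intro j _
          exact mul_le_mul_of_nonneg_left (hLle j) (hqpos j).le
      _ = -ε := by rw [← Finset.sum_mul, hqsum]; ring
  linarith

end ConverseMain

theorem stmt10 (C : Set (Set Ω)) (P : Set Ω → ℝ) (hC : IsSetField C) :
    CoherentIn P (System3 C P) ↔
      (IsCAProb C P ∧ FiniteAtomicPartition C P) := by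
  constructor
  · intro hcoh
    have hP1 : P Set.univ = 1 := by
      by_contra h
      exact hcoh (dutch_univ hC h)
    have hnn : ∀ A ∈ C, 0 ≤ P A := by
      intro A hA
      by_contra h
      exact hcoh (dutch_nonneg hC hA (by linarith [not_le.mp h]))
    have hfa : FinAdd C P := by
      intro A hA B hB hd
      by_contra h
      exact hcoh (dutch_finadd hC hA hB hd h)
    have hca := ca_of_coherent hC hcoh hfa hnn
    have hnofam : ¬ ∃ E : ℕ → Set Ω, (∀ k, E k ∈ C) ∧
        Pairwise (Function.onFun Disjoint E) ∧ ∀ k, 0 < P (E k) := by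
      rintro ⟨E, hE, hdisj, hpos⟩
      exact hcoh (dutch_of_family hC E hE hdisj hpos)
    exact ⟨⟨hP1, hnn, hfa, hca⟩, partition_of_no_family hC hfa hnn hP1 hnofam⟩
  · rintro ⟨hP, hpart⟩
    exact coherent_of_ca_partition hC hP hpart
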